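/- Suppose L : ℝ^d → ℝ is differentiable with L-Lipschitz gradient and bounded below by L(θ*). Consider SGD updates θ_{t+1} = θ_t − α_t g_t for t = 1,…,T, where conditional on θ_t, g_t is an unbiased estimate of ∇L(θ_t) with E‖g_t − ∇L(θ_t)‖² ≤ σ². If 0 < α_t < 2/L for all t, then ∑_{t=1}^T (2α_t − Lα_t²)·E‖∇L(θ_t)‖² ≤ 2(L(θ_1) − L(θ*)) + Lσ² ∑_{t=1}^T α_t². -/

import Mathlib

open MeasureTheory Finset
open scoped RealInnerProductSpace

/-- Descent lemma: a differentiable function with `L`-Lipschitz gradient admits the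
quadratic upper bound `𝓛 (x + v) ≤ 𝓛 x + ⟪∇𝓛 x, v⟫ + L/2 ‖v‖²`. -/
theorem sgd_descent_lemma {d : ℕ} (𝓛 : EuclideanSpace ℝ (Fin d) → ℝ) (L : ℝ)
    (hdiff : Differentiable ℝ 𝓛)
    (hlip : ∀ x y, ‖gradient 𝓛 x - gradient 𝓛 y‖ ≤ L * ‖x - y‖)
    (x v : EuclideanSpace ℝ (Fin d)) :
    𝓛 (x + v) ≤ 𝓛 x + ⟪gradient 𝓛 x, v⟫ + L / 2 * ‖v‖ ^ 2 := by
  have hφ : ∀ t : ℝ, HasDerivAt (fun s : ℝ => 𝓛 (x + s • v))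
      ⟪gradient 𝓛 (x + t • v), v⟫ t := by
    intro t
    have h1 : HasDerivAt (fun s : ℝ => x + s • v) v t := by
      simpa using ((hasDerivAt_id t).smul_const v).const_add x
    have h2 := ((hdiff (x + t • v)).hasGradientAt).hasFDerivAt
    have h3 := h2.comp_hasDerivAt t h1
    simpa [InnerProductSpace.toDual_apply_apply, Function.comp_def] using h3
  set c : ℝ := ⟪gradient 𝓛 x, v⟫ with hc
  set ψ : ℝ → ℝ := fun t => 𝓛 (x + t • v) - t * c - L * ‖v‖ ^ 2 / 2 * t ^ 2 with hψ
  have hψd : ∀ t : ℝ, HasDerivAt ψ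
      (⟪gradient 𝓛 (x + t • v), v⟫ - c - L * ‖v‖ ^ 2 * t) t := by
    intro t
    have h2 : HasDerivAt (fun s : ℝ => s * c) c t := hasDerivAt_mul_const c
    have h3 : HasDerivAt (fun s : ℝ => L * ‖v‖ ^ 2 / 2 * s ^ 2) (L * ‖v‖ ^ 2 * t) t := by
      have h : HasDerivAt (fun y : ℝ => L * ‖v‖ ^ 2 / 2 * y ^ 2)
          (L * ‖v‖ ^ 2 / 2 * (((2 : ℕ) : ℝ) * t ^ (2 - 1))) t :=
        (hasDerivAt_pow 2 t).const_mul (L * ‖v‖ ^ 2 / 2)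
      convert h using 1
      simp only [Nat.cast_ofNat, show (2 : ℕ) - 1 = 1 from rfl, pow_one]
      ring
    exact ((hφ t).sub h2).sub h3
  have hmono : AntitoneOn ψ (Set.Icc (0 : ℝ) 1) := by
    apply antitoneOn_of_deriv_nonpos (convex_Icc 0 1)
    · exact fun t _ => (hψd t).continuousAt.continuousWithinAt
    · intro t _
      exact ((hψd t).differentiableAt).differentiableWithinAt
    · intro t ht
      rw [interior_Icc] at ht
      rw [(hψd t).deriv]
      have hCS : ⟪gradient 𝓛 (x + t • v) - gradient 𝓛 x, v⟫
          ≤ ‖gradient 𝓛 (x + t • v) - gradient 𝓛 x‖ * ‖v‖ := real_inner_le_norm _ _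
      have hlips := hlip (x + t • v) x
      have hn : ‖x + t • v - x‖ = t * ‖v‖ := by
        rw [add_sub_cancel_left, norm_smul, Real.norm_eq_abs, abs_of_pos ht.1]
      have hsub : ⟪gradient 𝓛 (x + t • v), v⟫ - c
          = ⟪gradient 𝓛 (x + t • v) - gradient 𝓛 x, v⟫ := by
        rw [inner_sub_left]
      have hbound : ‖gradient 𝓛 (x + t • v) - gradient 𝓛 x‖ * ‖v‖
          ≤ L * ‖v‖ ^ 2 * t := by
        calc ‖gradient 𝓛 (x + t • v) - gradient 𝓛 x‖ * ‖v‖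
            ≤ (L * ‖x + t • v - x‖) * ‖v‖ :=
              mul_le_mul_of_nonneg_right hlips (norm_nonneg v)
          _ = L * ‖v‖ ^ 2 * t := by rw [hn]; ring
      linarith
  have h01 : ψ 1 ≤ ψ 0 :=
    hmono (Set.left_mem_Icc.mpr zero_le_one) (Set.right_mem_Icc.mpr zero_le_one) zero_le_one
  have hψ0 : ψ 0 = 𝓛 x := by simp [hψ]
  have hψ1 : ψ 1 = 𝓛 (x + v) - c - L * ‖v‖ ^ 2 / 2 := by simp [hψ]
  rw [hψ0, hψ1] at h01
  rw [hc] at h01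
  linarith

/-- Conditional expectation commutes with continuous linear maps. -/
theorem condexp_clm_comp {Ω : Type*} {m m0 : MeasurableSpace Ω} (hm : m ≤ m0)
    (μ : Measure Ω) [IsFiniteMeasure μ]
    {E F : Type*} [NormedAddCommGroup E] [NormedSpace ℝ E] [CompleteSpace E]
    [NormedAddCommGroup F] [NormedSpace ℝ F] [CompleteSpace F]
    (T : E →L[ℝ] F) {f : Ω → E} (hf : Integrable f μ) :
    (fun ω => T ((μ[f|m]) ω)) =ᵐ[μ] μ[fun ω => T (f ω)|m] := by
  haveI : IsFiniteMeasure (μ.trim hm) := isFiniteMeasure_trim hm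
  refine ae_eq_condExp_of_forall_setIntegral_eq hm (T.integrable_comp hf)
    (fun s _ _ => (T.integrable_comp integrable_condExp).integrableOn)
    (fun s hs hμs => ?_) ?_
  · rw [show ∫ x in s, T ((μ[f|m]) x) ∂μ = T (∫ x in s, (μ[f|m]) x ∂μ) from
      T.integral_comp_comm integrable_condExp.integrableOn,
      setIntegral_condExp hm hf hs, ← T.integral_comp_comm hf.integrableOn]
  · exact (T.continuous.comp_stronglyMeasurable stronglyMeasurable_condExp).aestronglyMeasurable


/-- Orthogonality: if `μ[G|m] = F` a.e. with `F` being `m`-measurable, then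
`E⟪F, G − F⟫ = 0`. -/
theorem sgd_condexp_ortho {d : ℕ} {Ω : Type*} {m m0 : MeasurableSpace Ω} (hm : m ≤ m0)
    (μ : @MeasureTheory.Measure Ω m0) [IsProbabilityMeasure μ]
    {F G : Ω → EuclideanSpace ℝ (Fin d)}
    (hcond : μ[G|m] =ᵐ[μ] F)
    (hFm : StronglyMeasurable[m] F)
    (hF2 : MemLp F 2 μ) (hG2 : MemLp G 2 μ) :
    ∫ ω, ⟪F ω, G ω - F ω⟫ ∂μ = 0 := by
  haveI : IsFiniteMeasure (μ.trim hm) := isFiniteMeasure_trim hm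
  have hmul_int : ∀ (f h : Ω → ℝ), MemLp f 2 μ → MemLp h 2 μ →
      Integrable (fun ω => f ω * h ω) μ := by
    intro f h hf hh
    refine Integrable.mono'
      ((((memLp_two_iff_integrable_sq hf.1).mp hf).add
        ((memLp_two_iff_integrable_sq hh.1).mp hh)).div_const 2)
      (hf.1.mul hh.1) (Filter.Eventually.of_forall fun ω => ?_)
    simp only [Pi.add_apply]
    rw [Real.norm_eq_abs, abs_mul]
    nlinarith [sq_nonneg (|f ω| - |h ω|), abs_nonneg (f ω), abs_nonneg (h ω),
      sq_abs (f ω), sq_abs (h ω)]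
  have hGint : Integrable G μ := hG2.integrable one_le_two
  have hFint : Integrable F μ := hF2.integrable one_le_two
  have hΔL2 : MemLp (fun ω => G ω - F ω) 2 μ := hG2.sub hF2
  have hΔint : Integrable (fun ω => G ω - F ω) μ := hGint.sub hFint
  have hΔcond : μ[fun ω => G ω - F ω|m] =ᵐ[μ] 0 := by
    have h1 : μ[G - F|m] =ᵐ[μ] μ[G|m] - μ[F|m] := condExp_sub hGint hFint m
    have h2 : μ[F|m] = F := condExp_of_stronglyMeasurable hm hFm hFint
    have h4 : (fun ω => G ω - F ω) = G - F := rfl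
    rw [h4]
    filter_upwards [h1, hcond] with ω h1ω h3ω
    rw [h1ω]
    simp only [Pi.sub_apply, h2]
    rw [h3ω]
    simp
  have hcoord : ∀ i : Fin d, ∫ ω, F ω i * (G ω - F ω) i ∂μ = 0 := by
    intro i
    have hproj := condexp_clm_comp hm μ (EuclideanSpace.proj i (𝕜 := ℝ)) hΔint
    have hΔi0 : μ[fun ω => (G ω - F ω) i|m] =ᵐ[μ] 0 := by
      have he : (fun ω => (EuclideanSpace.proj i (𝕜 := ℝ)) (G ω - F ω))
          = fun ω => (G ω - F ω) i := rfl
      rw [← he]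
      refine (hproj.symm.trans ?_)
      filter_upwards [hΔcond] with ω hω
      rw [hω]
      simp
    have hFi : StronglyMeasurable[m] fun ω => F ω i :=
      (EuclideanSpace.proj i (𝕜 := ℝ)).continuous.comp_stronglyMeasurable hFm
    have hFiL2 : MemLp (fun ω => F ω i) 2 μ :=
      (EuclideanSpace.proj i (𝕜 := ℝ)).comp_memLp' hF2
    have hΔiL2 : MemLp (fun ω => (G ω - F ω) i) 2 μ :=
      (EuclideanSpace.proj i (𝕜 := ℝ)).comp_memLp' hΔL2
    have hprod : Integrable (fun ω => F ω i * (G ω - F ω) i) μ :=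
      hmul_int _ _ hFiL2 hΔiL2
    have hΔiint : Integrable (fun ω => (G ω - F ω) i) μ := hΔiL2.integrable one_le_two
    have hpull := condExp_mul_of_stronglyMeasurable_left (μ := μ) hFi (by exact hprod) hΔiint
    have hzero : μ[(fun ω => F ω i) * fun ω => (G ω - F ω) i|m] =ᵐ[μ] 0 := by
      refine hpull.trans ?_
      filter_upwards [hΔi0] with ω hω
      simp only [Pi.mul_apply, hω]
      simp
    calc ∫ ω, F ω i * (G ω - F ω) i ∂μ
        = ∫ ω, (μ[(fun ω => F ω i) * fun ω => (G ω - F ω) i|m]) ω ∂μ := by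
          rw [integral_condExp hm]
          rfl
      _ = 0 := by
          rw [integral_congr_ae hzero]
          simp
  have hinner_eq : ∀ ω, ⟪F ω, G ω - F ω⟫
      = ∑ i : Fin d, F ω i * (G ω - F ω) i := by
    intro ω
    simp [PiLp.inner_apply, RCLike.inner_apply]
    exact Finset.sum_congr rfl (fun i _ => mul_comm _ _)
  rw [integral_congr_ae (Filter.Eventually.of_forall hinner_eq)]
  rw [integral_finset_sum _ (fun i _ => hmul_int (fun ω => F ω i) (fun ω => (G ω - F ω) i)
    ((EuclideanSpace.proj i (𝕜 := ℝ)).comp_memLp' hF2)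
    ((EuclideanSpace.proj i (𝕜 := ℝ)).comp_memLp' hΔL2))]
  exact Finset.sum_eq_zero fun i _ => hcoord i

set_option maxHeartbeats 1000000 in
/-- SGD bound: if `𝓛` is differentiable with `L`-Lipschitz gradient and bounded below
by `𝓛 θstar`, and `θ (t+1) = θ t − α t • g t` where, conditional on `θ t`, `g t` is an
unbiased estimate of `∇𝓛 (θ t)` with variance at most `σ²`, and `0 < α t < 2/L`, then
`∑_{t=1}^T (2 α t − L (α t)²) E‖∇𝓛(θ t)‖² ≤ 2(𝓛 θ₁ − 𝓛 θstar) + L σ² ∑_{t=1}^T (α t)²`. -/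
theorem sgd_sum_bound {d : ℕ} {Ω : Type*} [MeasurableSpace Ω]
    (μ : Measure Ω) [IsProbabilityMeasure μ]
    (𝓛 : EuclideanSpace ℝ (Fin d) → ℝ) (L σ : ℝ) (hL : 0 < L)
    (hdiff : Differentiable ℝ 𝓛)
    (hlip : ∀ x y, ‖gradient 𝓛 x - gradient 𝓛 y‖ ≤ L * ‖x - y‖)
    (θstar : EuclideanSpace ℝ (Fin d)) (hbelow : ∀ x, 𝓛 θstar ≤ 𝓛 x)
    (T : ℕ) (α : ℕ → ℝ) (hα : ∀ t, 0 < α t ∧ α t < 2 / L)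
    (θ g : ℕ → Ω → EuclideanSpace ℝ (Fin d))
    (θ₁ : EuclideanSpace ℝ (Fin d)) (hinit : θ 1 = fun _ => θ₁)
    (hupdate : ∀ t ω, θ (t + 1) ω = θ t ω - α t • g t ω)
    (hmeas : ∀ t, Measurable (θ t))
    (hunbiased : ∀ t,
      μ[g t | MeasurableSpace.comap (θ t) (by infer_instance)]
        =ᵐ[μ] fun ω => gradient 𝓛 (θ t ω))
    (hvar : ∀ t, ∫ ω, ‖g t ω - gradient 𝓛 (θ t ω)‖ ^ 2 ∂μ ≤ σ ^ 2)
    (hint : ∀ t, Integrable (fun ω => ‖g t ω‖ ^ 2) μ) :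
    ∑ t ∈ Finset.Icc 1 T,
        (2 * α t - L * α t ^ 2) * ∫ ω, ‖gradient 𝓛 (θ t ω)‖ ^ 2 ∂μ
      ≤ 2 * (𝓛 θ₁ - 𝓛 θstar) + L * σ ^ 2 * ∑ t ∈ Finset.Icc 1 T, α t ^ 2 := by
  have hαpos : ∀ t, 0 < α t := fun t => (hα t).1
  -- g is measurable since it is a function of θ
  have hgeq : ∀ t, g t = fun ω => (α t)⁻¹ • (θ t ω - θ (t + 1) ω) := by
    intro t; funext ω
    have h := hupdate t ω
    have h2 : α t • g t ω = θ t ω - θ (t + 1) ω := by rw [h]; abel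
    rw [← h2, smul_smul, inv_mul_cancel₀ (hαpos t).ne', one_smul]
  have hgmeas : ∀ t, Measurable (g t) := by
    intro t; rw [hgeq t]
    exact ((hmeas t).sub (hmeas (t + 1))).const_smul (α t)⁻¹
  have hgL2 : ∀ t, MemLp (g t) 2 μ := fun t =>
    (memLp_two_iff_integrable_sq_norm (hgmeas t).aestronglyMeasurable).mpr (hint t)
  have hgradcont : Continuous (gradient 𝓛) := by
    refine (LipschitzWith.of_dist_le_mul (K := Real.toNNReal L) fun a b => ?_).continuous
    rw [dist_eq_norm, dist_eq_norm, Real.coe_toNNReal L hL.le]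
    exact hlip a b
  have hFmeas : ∀ t, Measurable fun ω => gradient 𝓛 (θ t ω) := fun t =>
    hgradcont.measurable.comp (hmeas t)
  have hθL2 : ∀ t, 1 ≤ t → MemLp (θ t) 2 μ := by
    intro t ht
    induction t, ht using Nat.le_induction with
    | base => rw [hinit]; exact memLp_const θ₁
    | succ n hn ih =>
      have h : θ (n + 1) = fun ω => θ n ω - α n • g n ω := funext (hupdate n)
      rw [h]
      exact ih.sub ((hgL2 n).const_smul (α n))
  have hFL2 : ∀ t, 1 ≤ t → MemLp (fun ω => gradient 𝓛 (θ t ω)) 2 μ := by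
    intro t ht
    have hB : MemLp (fun ω => L * ‖θ t ω‖ + (L * ‖θstar‖ + ‖gradient 𝓛 θstar‖)) 2 μ :=
      ((hθL2 t ht).norm.const_mul L).add (memLp_const _)
    refine MemLp.of_le hB (hFmeas t).aestronglyMeasurable
      (Filter.Eventually.of_forall fun ω => ?_)
    have h1 : ‖gradient 𝓛 (θ t ω)‖ ≤ L * ‖θ t ω - θstar‖ + ‖gradient 𝓛 θstar‖ := by
      calc ‖gradient 𝓛 (θ t ω)‖
          = ‖(gradient 𝓛 (θ t ω) - gradient 𝓛 θstar) + gradient 𝓛 θstar‖ := by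
            rw [sub_add_cancel]
        _ ≤ ‖gradient 𝓛 (θ t ω) - gradient 𝓛 θstar‖ + ‖gradient 𝓛 θstar‖ := norm_add_le _ _
        _ ≤ L * ‖θ t ω - θstar‖ + ‖gradient 𝓛 θstar‖ := by
            linarith [hlip (θ t ω) θstar]
    have h2 : ‖θ t ω - θstar‖ ≤ ‖θ t ω‖ + ‖θstar‖ := norm_sub_le _ _
    have h3 : (0 : ℝ) ≤ L * ‖θ t ω‖ + (L * ‖θstar‖ + ‖gradient 𝓛 θstar‖) := by positivity
    rw [Real.norm_eq_abs, abs_of_nonneg h3]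
    nlinarith [norm_nonneg (θ t ω), hL.le]
  have hFsq : ∀ t, 1 ≤ t → Integrable (fun ω => ‖gradient 𝓛 (θ t ω)‖ ^ 2) μ := fun t ht =>
    (memLp_two_iff_integrable_sq_norm (hFmeas t).aestronglyMeasurable).mp (hFL2 t ht)
  -- inner products of L² functions are integrable
  have hinner_int : ∀ (f h : Ω → EuclideanSpace ℝ (Fin d)), MemLp f 2 μ → MemLp h 2 μ →
      Integrable (fun ω => ⟪f ω, h ω⟫) μ := by
    intro f h hf hh
    refine Integrable.mono'
      ((((memLp_two_iff_integrable_sq_norm hf.1).mp hf).add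
        ((memLp_two_iff_integrable_sq_norm hh.1).mp hh)).div_const 2)
      (hf.1.inner hh.1) (Filter.Eventually.of_forall fun ω => ?_)
    simp only [Pi.add_apply]
    rw [Real.norm_eq_abs]
    have h1 := abs_real_inner_le_norm (f ω) (h ω)
    nlinarith [sq_nonneg (‖f ω‖ - ‖h ω‖)]
  have hmul_int : ∀ (f h : Ω → ℝ), MemLp f 2 μ → MemLp h 2 μ →
      Integrable (fun ω => f ω * h ω) μ := by
    intro f h hf hh
    refine Integrable.mono'
      ((((memLp_two_iff_integrable_sq hf.1).mp hf).add
        ((memLp_two_iff_integrable_sq hh.1).mp hh)).div_const 2)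
      (hf.1.mul hh.1) (Filter.Eventually.of_forall fun ω => ?_)
    simp only [Pi.add_apply]
    rw [Real.norm_eq_abs, abs_mul]
    nlinarith [sq_nonneg (|f ω| - |h ω|), abs_nonneg (f ω), abs_nonneg (h ω),
      sq_abs (f ω), sq_abs (h ω)]
  -- integrability of 𝓛 ∘ θ t
  have h𝓛int : ∀ t, 1 ≤ t → Integrable (fun ω => 𝓛 (θ t ω)) μ := by
    intro t ht
    have hup : ∀ x, 𝓛 x ≤ 𝓛 θstar + ⟪gradient 𝓛 θstar, x - θstar⟫
        + L / 2 * ‖x - θstar‖ ^ 2 := by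
      intro x
      have := sgd_descent_lemma 𝓛 L hdiff hlip θstar (x - θstar)
      simpa using this
    have hsub2 : MemLp (fun ω => θ t ω - θstar) 2 μ := (hθL2 t ht).sub (memLp_const θstar)
    have hBint : Integrable (fun ω => |𝓛 θstar| + ‖gradient 𝓛 θstar‖ * ‖θ t ω - θstar‖
        + L / 2 * ‖θ t ω - θstar‖ ^ 2) μ := by
      refine Integrable.add (Integrable.add (integrable_const _) ?_) ?_
      · exact ((hsub2.integrable one_le_two).norm.const_mul _)
      · exact ((memLp_two_iff_integrable_sq_norm hsub2.1).mp hsub2).const_mul _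
    refine hBint.mono' ((hdiff.continuous.measurable.comp (hmeas t)).aestronglyMeasurable)
      (Filter.Eventually.of_forall fun ω => ?_)
    have h1 := hbelow (θ t ω)
    have h2 := hup (θ t ω)
    have h3 := abs_real_inner_le_norm (gradient 𝓛 θstar) (θ t ω - θstar)
    have h4 : (0 : ℝ) ≤ ‖gradient 𝓛 θstar‖ * ‖θ t ω - θstar‖ :=
      mul_nonneg (norm_nonneg _) (norm_nonneg _)
    have h5 : (0 : ℝ) ≤ L / 2 * ‖θ t ω - θstar‖ ^ 2 := by positivity
    rw [Real.norm_eq_abs, abs_le]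
    constructor
    · nlinarith [le_abs_self (𝓛 θstar), neg_abs_le (𝓛 θstar)]
    · nlinarith [le_abs_self (𝓛 θstar), abs_le.mp (le_refl |⟪gradient 𝓛 θstar, θ t ω - θstar⟫|) ,
        le_abs_self ⟪gradient 𝓛 θstar, θ t ω - θstar⟫]
  -- key orthogonality: E⟪∇𝓛(θ t), g t − ∇𝓛(θ t)⟫ = 0
  have hortho : ∀ t, 1 ≤ t →
      ∫ ω, ⟪gradient 𝓛 (θ t ω), g t ω - gradient 𝓛 (θ t ω)⟫ ∂μ = 0 := by
    intro t ht
    exact sgd_condexp_ortho (m := MeasurableSpace.comap (θ t) (by infer_instance))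
      (measurable_iff_comap_le.mp (hmeas t)) μ (hunbiased t)
      ((hgradcont.measurable.comp (measurable_iff_comap_le.mpr le_rfl)).stronglyMeasurable)
      (hFL2 t ht) (hgL2 t)
  -- E⟪∇𝓛(θ t), g t⟫ = E‖∇𝓛(θ t)‖²
  have hkey : ∀ t, 1 ≤ t →
      ∫ ω, ⟪gradient 𝓛 (θ t ω), g t ω⟫ ∂μ = ∫ ω, ‖gradient 𝓛 (θ t ω)‖ ^ 2 ∂μ := by
    intro t ht
    have h := hortho t ht
    have heq : ∀ ω, ⟪gradient 𝓛 (θ t ω), g t ω - gradient 𝓛 (θ t ω)⟫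
        = ⟪gradient 𝓛 (θ t ω), g t ω⟫ - ‖gradient 𝓛 (θ t ω)‖ ^ 2 := by
      intro ω
      rw [inner_sub_right, real_inner_self_eq_norm_sq]
    rw [integral_congr_ae (Filter.Eventually.of_forall heq)] at h
    rw [integral_sub (hinner_int _ _ (hFL2 t ht) (hgL2 t)) (hFsq t ht)] at h
    linarith
  -- E‖g t‖² ≤ σ² + E‖∇𝓛(θ t)‖²
  have hgsq_bound : ∀ t, 1 ≤ t →
      ∫ ω, ‖g t ω‖ ^ 2 ∂μ ≤ σ ^ 2 + ∫ ω, ‖gradient 𝓛 (θ t ω)‖ ^ 2 ∂μ := by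
    intro t ht
    have hΔL2 : MemLp (fun ω => g t ω - gradient 𝓛 (θ t ω)) 2 μ :=
      (hgL2 t).sub (hFL2 t ht)
    have hΔsq : Integrable (fun ω => ‖g t ω - gradient 𝓛 (θ t ω)‖ ^ 2) μ :=
      (memLp_two_iff_integrable_sq_norm hΔL2.1).mp hΔL2
    have hexp : ∀ ω, ‖g t ω‖ ^ 2 = ‖g t ω - gradient 𝓛 (θ t ω)‖ ^ 2
        + 2 * ⟪gradient 𝓛 (θ t ω), g t ω - gradient 𝓛 (θ t ω)⟫
        + ‖gradient 𝓛 (θ t ω)‖ ^ 2 := by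
      intro ω
      have := norm_add_sq_real (gradient 𝓛 (θ t ω)) (g t ω - gradient 𝓛 (θ t ω))
      rw [add_sub_cancel] at this
      rw [this]
      ring
    have hii := hinner_int _ _ (hFL2 t ht) hΔL2
    have hA : Integrable (fun ω => ‖g t ω - gradient 𝓛 (θ t ω)‖ ^ 2
        + 2 * ⟪gradient 𝓛 (θ t ω), g t ω - gradient 𝓛 (θ t ω)⟫) μ :=
      hΔsq.add (hii.const_mul 2)
    calc ∫ ω, ‖g t ω‖ ^ 2 ∂μ
        = ∫ ω, (‖g t ω - gradient 𝓛 (θ t ω)‖ ^ 2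
            + 2 * ⟪gradient 𝓛 (θ t ω), g t ω - gradient 𝓛 (θ t ω)⟫
            + ‖gradient 𝓛 (θ t ω)‖ ^ 2) ∂μ :=
          integral_congr_ae (Filter.Eventually.of_forall hexp)
      _ = (∫ ω, ‖g t ω - gradient 𝓛 (θ t ω)‖ ^ 2 ∂μ)
            + 2 * (∫ ω, ⟪gradient 𝓛 (θ t ω), g t ω - gradient 𝓛 (θ t ω)⟫ ∂μ)
            + ∫ ω, ‖gradient 𝓛 (θ t ω)‖ ^ 2 ∂μ := by
          rw [integral_add hA (hFsq t ht),
            integral_add hΔsq (hii.const_mul 2), integral_const_mul]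
      _ ≤ σ ^ 2 + ∫ ω, ‖gradient 𝓛 (θ t ω)‖ ^ 2 ∂μ := by
          have h1 := hvar t
          have h2 := hortho t ht
          rw [h2]
          linarith
  -- per-step inequality
  have hstep : ∀ t, 1 ≤ t →
      (2 * α t - L * α t ^ 2) * ∫ ω, ‖gradient 𝓛 (θ t ω)‖ ^ 2 ∂μ
        ≤ 2 * ((∫ ω, 𝓛 (θ t ω) ∂μ) - ∫ ω, 𝓛 (θ (t + 1) ω) ∂μ) + L * σ ^ 2 * α t ^ 2 := by
    intro t ht
    have hpt : ∀ ω, 𝓛 (θ (t + 1) ω) ≤ 𝓛 (θ t ω)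
        - α t * ⟪gradient 𝓛 (θ t ω), g t ω⟫ + L / 2 * α t ^ 2 * ‖g t ω‖ ^ 2 := by
      intro ω
      have hd := sgd_descent_lemma 𝓛 L hdiff hlip (θ t ω) (-(α t • g t ω))
      have h1 : ‖-(α t • g t ω)‖ ^ 2 = α t ^ 2 * ‖g t ω‖ ^ 2 := by
        rw [norm_neg, norm_smul, Real.norm_eq_abs, mul_pow, sq_abs]
      have h2 : ⟪gradient 𝓛 (θ t ω), -(α t • g t ω)⟫
          = -(α t * ⟪gradient 𝓛 (θ t ω), g t ω⟫) := by
        rw [inner_neg_right, real_inner_smul_right]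
      calc 𝓛 (θ (t + 1) ω) = 𝓛 (θ t ω + -(α t • g t ω)) := by
            rw [hupdate t ω, sub_eq_add_neg]
        _ ≤ 𝓛 (θ t ω) + ⟪gradient 𝓛 (θ t ω), -(α t • g t ω)⟫
            + L / 2 * ‖-(α t • g t ω)‖ ^ 2 := hd
        _ = 𝓛 (θ t ω) - α t * ⟪gradient 𝓛 (θ t ω), g t ω⟫
            + L / 2 * α t ^ 2 * ‖g t ω‖ ^ 2 := by rw [h1, h2]; ring
    have hii := hinner_int _ _ (hFL2 t ht) (hgL2 t)
    have hA : Integrable (fun ω => 𝓛 (θ t ω)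
        - α t * ⟪gradient 𝓛 (θ t ω), g t ω⟫) μ :=
      (h𝓛int t ht).sub (hii.const_mul (α t))
    have hRint : Integrable (fun ω => 𝓛 (θ t ω)
        - α t * ⟪gradient 𝓛 (θ t ω), g t ω⟫ + L / 2 * α t ^ 2 * ‖g t ω‖ ^ 2) μ :=
      hA.add ((hint t).const_mul (L / 2 * α t ^ 2))
    have hle := integral_mono (h𝓛int (t + 1) (le_trans ht (Nat.le_succ t))) hRint hpt
    have hR : ∫ ω, (𝓛 (θ t ω) - α t * ⟪gradient 𝓛 (θ t ω), g t ω⟫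
        + L / 2 * α t ^ 2 * ‖g t ω‖ ^ 2) ∂μ
        = (∫ ω, 𝓛 (θ t ω) ∂μ) - α t * (∫ ω, ⟪gradient 𝓛 (θ t ω), g t ω⟫ ∂μ)
          + L / 2 * α t ^ 2 * ∫ ω, ‖g t ω‖ ^ 2 ∂μ := by
      rw [integral_add hA ((hint t).const_mul (L / 2 * α t ^ 2)),
        integral_sub (h𝓛int t ht) (hii.const_mul (α t)),
        integral_const_mul, integral_const_mul]
    rw [hR, hkey t ht] at hle
    have hb := hgsq_bound t ht
    have hc : (0 : ℝ) ≤ L / 2 * α t ^ 2 := by positivity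
    have hmul := mul_le_mul_of_nonneg_left hb hc
    nlinarith
  -- telescoping
  have hI1 : (∫ ω, 𝓛 (θ 1 ω) ∂μ) = 𝓛 θ₁ := by
    rw [hinit]
    simp
  have hIlow : ∀ t, 1 ≤ t → 𝓛 θstar ≤ ∫ ω, 𝓛 (θ t ω) ∂μ := by
    intro t ht
    have h := integral_mono (integrable_const (𝓛 θstar)) (h𝓛int t ht)
      (fun ω => hbelow (θ t ω))
    simpa using h
  have main : ∀ n : ℕ,
      (∑ t ∈ Finset.Icc 1 n, (2 * α t - L * α t ^ 2) * ∫ ω, ‖gradient 𝓛 (θ t ω)‖ ^ 2 ∂μ)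
        + 2 * (∫ ω, 𝓛 (θ (n + 1) ω) ∂μ)
      ≤ 2 * (∫ ω, 𝓛 (θ 1 ω) ∂μ) + L * σ ^ 2 * ∑ t ∈ Finset.Icc 1 n, α t ^ 2 := by
    intro n
    induction n with
    | zero =>
      rw [show Finset.Icc 1 0 = ∅ from rfl]
      simp
    | succ n ih =>
      rw [Finset.sum_Icc_succ_top (by omega : 1 ≤ n + 1),
        Finset.sum_Icc_succ_top (by omega : 1 ≤ n + 1)]
      have hs := hstep (n + 1) (by omega)
      linarith
  have hfin := main T
  have h2 := hIlow (T + 1) (by omega)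
  rw [hI1] at hfin
  linarith
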